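/- Let D ⊂ ℝ² be a nonempty open, convex, bounded set, let Ω̂ be an open set whose closure is contained in D, let M > 0, and let (Φ^k)_{k∈ℕ} be a sequence of bijections Φ^k : closure(D) → closure(D), each Lipschitz with constant M and satisfying Φ^k(x) = x for all x ∈ ∂D. Set Ω^k := Φ^k(Ω̂). Then there exist a subsequence (Φ^{k_j})_{j∈ℕ}, a continuous map Φ : closure(D) → closure(D) with Φ(x) = x for all x ∈ ∂D, and an open set Ω ⊆ D, namely Ω = D \ Φ(closure(D) \ Ω̂), such that Φ^{k_j} → Φ uniformly on closure(D) and ρ_H^c(Ω^{k_j}, Ω) → 0 as j → ∞. -/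

import Mathlib

set_option synthInstance.maxHeartbeats 1000000

/-- The distance-to-complement function `d_{∁Ω}(x) = inf{|x − y| : y ∈ closure D \ Ω}`. -/
noncomputable def distCompl {d : ℕ} (D Ω : Set (EuclideanSpace ℝ (Fin d)))
    (x : EuclideanSpace ℝ (Fin d)) : ℝ :=
  sInf ((fun y => ‖x - y‖) '' (closure D \ Ω))

/-- The Hausdorff complementary distance
`ρ_H^c(Ω₁, Ω₂) = max_{x ∈ closure D} |d_{∁Ω₁}(x) − d_{∁Ω₂}(x)|`. -/
noncomputable def hcDist {d : ℕ} (D Ω₁ Ω₂ : Set (EuclideanSpace ℝ (Fin d))) : ℝ :=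
  sSup ((fun x => |distCompl D Ω₁ x - distCompl D Ω₂ x|) '' closure D)

lemma distCompl_eq_infDist {d : ℕ} (D Ω : Set (EuclideanSpace ℝ (Fin d)))
    (x : EuclideanSpace ℝ (Fin d)) :
    distCompl D Ω x = Metric.infDist x (closure D \ Ω) := by
  rw [distCompl, Metric.infDist_eq_iInf, sInf_image']
  simp [dist_eq_norm]

lemma infDist_image_le_add {α : Type*} [PseudoMetricSpace α] {K : Set α} (hK : K.Nonempty)
    {f g : α → α} {ε : ℝ} (h : ∀ y ∈ K, dist (f y) (g y) ≤ ε) (x : α) :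
    Metric.infDist x (f '' K) ≤ Metric.infDist x (g '' K) + ε := by
  refine le_of_forall_pos_le_add fun δ hδ => ?_
  obtain ⟨b, hb, hbd⟩ := (Metric.infDist_lt_iff (hK.image g)).1
    (lt_add_of_pos_right _ hδ)
  obtain ⟨y, hy, rfl⟩ := hb
  have h1 : Metric.infDist x (f '' K) ≤ dist x (f y) :=
    Metric.infDist_le_dist_of_mem (Set.mem_image_of_mem f hy)
  have h2 : dist x (f y) ≤ dist x (g y) + dist (g y) (f y) := dist_triangle _ _ _
  have h3 : dist (g y) (f y) ≤ ε := by rw [dist_comm]; exact h y hy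
  linarith

theorem stmt11 (D Ωhat : Set (EuclideanSpace ℝ (Fin 2)))
    (hDopen : IsOpen D) (hDconv : Convex ℝ D) (hDbdd : Bornology.IsBounded D)
    (hDne : D.Nonempty)
    (hΩopen : IsOpen Ωhat) (hΩD : closure Ωhat ⊆ D)
    (M : ℝ) (hM : 0 < M)
    (Φs : ℕ → EuclideanSpace ℝ (Fin 2) → EuclideanSpace ℝ (Fin 2))
    (hbij : ∀ k, Set.BijOn (Φs k) (closure D) (closure D))
    (hlip : ∀ k, LipschitzOnWith (Real.toNNReal M) (Φs k) (closure D))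
    (hbd : ∀ k, ∀ x ∈ frontier D, Φs k x = x) :
    ∃ ψ : ℕ → ℕ, StrictMono ψ ∧
      ∃ Φ : EuclideanSpace ℝ (Fin 2) → EuclideanSpace ℝ (Fin 2),
        ContinuousOn Φ (closure D) ∧
        Set.MapsTo Φ (closure D) (closure D) ∧
        (∀ x ∈ frontier D, Φ x = x) ∧
        TendstoUniformlyOn (fun j => Φs (ψ j)) Φ Filter.atTop (closure D) ∧
        IsOpen (D \ Φ '' (closure D \ Ωhat)) ∧
        (D \ Φ '' (closure D \ Ωhat)) ⊆ D ∧
        Filter.Tendsto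
          (fun j => hcDist D (Φs (ψ j) '' Ωhat) (D \ Φ '' (closure D \ Ωhat)))
          Filter.atTop (nhds 0) := by
  classical
  have hK : IsCompact (closure D) :=
    Metric.isCompact_of_isClosed_isBounded isClosed_closure hDbdd.closure
  haveI : CompactSpace (closure D) := isCompact_iff_compactSpace.1 hK
  have hΩsub : Ωhat ⊆ closure D := fun x hx => subset_closure (hΩD (subset_closure hx))
  have hMcoe : ((Real.toNNReal M : NNReal) : ℝ) = M := Real.coe_toNNReal _ hM.le
  -- bounded continuous restrictions
  have hcont : ∀ k, Continuous ((closure D).restrict (Φs k)) := fun k =>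
    continuousOn_iff_continuous_restrict.1 (hlip k).continuousOn
  set F : ℕ → BoundedContinuousFunction (closure D) (EuclideanSpace ℝ (Fin 2)) := fun k =>
    BoundedContinuousFunction.mkOfCompact ⟨(closure D).restrict (Φs k), hcont k⟩ with hF
  have hFapp : ∀ k (x : closure D), F k x = Φs k x := fun k x => rfl
  -- Arzelà–Ascoli
  have in_s : ∀ (f : BoundedContinuousFunction (closure D) (EuclideanSpace ℝ (Fin 2))) (x : closure D),
      f ∈ Set.range F → f x ∈ closure D := by
    rintro f x ⟨k, rfl⟩
    exact (hbij k).mapsTo x.2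
  have equi : Equicontinuous (fun f : Set.range F => ⇑(f : BoundedContinuousFunction (closure D) (EuclideanSpace ℝ (Fin 2)))) := by
    apply Metric.equicontinuous_of_continuity_modulus (fun t => M * t)
    · have : Filter.Tendsto (fun t : ℝ => M * t) (nhds 0) (nhds (M * 0)) :=
        (continuous_const.mul continuous_id).tendsto 0
      simpa using this
    · rintro x y ⟨f, k, rfl⟩
      have := (hlip k).dist_le_mul x x.2 y y.2
      rw [hMcoe] at this
      simpa [hFapp, Subtype.dist_eq] using this
  have hAcomp : IsCompact (closure (Set.range F)) :=
    BoundedContinuousFunction.arzela_ascoli (closure D) hK (Set.range F) in_s equi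
  obtain ⟨g, _, ψ, hψ, htend⟩ :=
    hAcomp.tendsto_subseq (fun k => subset_closure (Set.mem_range_self k))
  have huc : TendstoUniformly (fun j => ⇑(F (ψ j))) (⇑g) Filter.atTop :=
    BoundedContinuousFunction.tendsto_iff_tendstoUniformly.1 htend
  -- define the limit map
  set Φ : EuclideanSpace ℝ (Fin 2) → EuclideanSpace ℝ (Fin 2) := fun x => if h : x ∈ closure D then g ⟨x, h⟩ else x with hΦdef
  have hΦrestrict : ∀ x : closure D, Φ x = g x := by
    rintro ⟨x, hx⟩; simp [hΦdef, hx]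
  have hptwise : ∀ x : closure D,
      Filter.Tendsto (fun j => Φs (ψ j) x) Filter.atTop (nhds (g x)) := fun x => by
    simpa [hFapp] using huc.tendsto_at x
  have hΦcont : ContinuousOn Φ (closure D) := by
    rw [continuousOn_iff_continuous_restrict]
    have : (closure D).restrict Φ = ⇑g := funext fun x => hΦrestrict x
    change Continuous ((closure D).restrict Φ)
    rw [this]; exact g.continuous
  have hΦmaps : Set.MapsTo Φ (closure D) (closure D) := by
    intro x hx
    rw [hΦrestrict ⟨x, hx⟩]
    exact isClosed_closure.mem_of_tendsto (hptwise ⟨x, hx⟩)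
      (Filter.Eventually.of_forall fun j => (hbij (ψ j)).mapsTo hx)
  have hfrcl : frontier D ⊆ closure D := frontier_subset_closure
  have hΦfix : ∀ x ∈ frontier D, Φ x = x := by
    intro x hx
    rw [hΦrestrict ⟨x, hfrcl hx⟩]
    refine tendsto_nhds_unique (hptwise ⟨x, hfrcl hx⟩) ?_
    simpa [hbd _ x hx] using (tendsto_const_nhds : Filter.Tendsto (fun _ : ℕ => x) _ _)
  have htuo : TendstoUniformlyOn (fun j => Φs (ψ j)) Φ Filter.atTop (closure D) := by
    rw [tendstoUniformlyOn_iff_tendstoUniformly_comp_coe]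
    have : (Φ ∘ (Subtype.val : closure D → EuclideanSpace ℝ (Fin 2))) = ⇑g := funext fun x => hΦrestrict x
    rw [this]
    exact huc
  -- the complement set K'
  set K' : Set (EuclideanSpace ℝ (Fin 2)) := closure D \ Ωhat with hK'def
  have hfrK' : frontier D ⊆ K' := by
    intro x hx
    refine ⟨hfrcl hx, fun hxΩ => ?_⟩
    have : x ∈ D := hΩD (subset_closure hxΩ)
    rw [← hDopen.interior_eq] at this
    exact hx.2 this
  have hDneuniv : D ≠ Set.univ := by
    intro h
    exact hK.ne_univ (by rw [h, closure_univ])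
  have hfrne : (frontier D).Nonempty := by
    rw [Set.nonempty_iff_ne_empty]
    intro h
    rcases isClopen_iff.1 (isClopen_iff_frontier_eq_empty.2 h) with h1 | h1
    · exact hDne.ne_empty h1
    · exact hDneuniv h1
  have hK'ne : K'.Nonempty := ⟨hfrne.choose, hfrK' hfrne.choose_spec⟩
  -- set identities
  have eq1 : ∀ k, closure D \ (Φs k '' Ωhat) = Φs k '' K' := by
    intro k
    ext x
    constructor
    · rintro ⟨hxcl, hxim⟩
      obtain ⟨y, hy, rfl⟩ := (hbij k).surjOn hxcl
      refine ⟨y, ⟨hy, fun hyΩ => hxim ⟨y, hyΩ, rfl⟩⟩, rfl⟩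
    · rintro ⟨y, ⟨hy, hyΩ⟩, rfl⟩
      refine ⟨(hbij k).mapsTo hy, ?_⟩
      rintro ⟨z, hzΩ, hz⟩
      exact hyΩ (by rwa [(hbij k).injOn (hΩsub hzΩ) hy hz] at hzΩ)
  have eq2 : closure D \ (D \ Φ '' K') = Φ '' K' := by
    ext x
    constructor
    · rintro ⟨hxcl, hxd⟩
      by_cases hxD : x ∈ D
      · by_contra hxim
        exact hxd ⟨hxD, hxim⟩
      · have hxfr : x ∈ frontier D := by
          rw [hDopen.frontier_eq]; exact ⟨hxcl, hxD⟩
        exact ⟨x, hfrK' hxfr, hΦfix x hxfr⟩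
    · rintro ⟨y, hy, rfl⟩
      exact ⟨hΦmaps hy.1, fun h => h.2 ⟨y, hy, rfl⟩⟩
  -- openness
  have hK'cpt : IsCompact K' := hK.diff hΩopen
  have himcpt : IsCompact (Φ '' K') :=
    hK'cpt.image_of_continuousOn (hΦcont.mono Set.diff_subset)
  have hopen : IsOpen (D \ Φ '' K') := hDopen.sdiff himcpt.isClosed
  -- conclusion
  refine ⟨ψ, hψ, Φ, hΦcont, hΦmaps, hΦfix, htuo, hopen, Set.diff_subset, ?_⟩
  rw [Metric.tendsto_atTop]
  intro ε hε
  have hev := (Metric.tendstoUniformlyOn_iff.1 htuo) (ε / 2) (by linarith)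
  obtain ⟨N, hN⟩ := Filter.eventually_atTop.1 hev
  refine ⟨N, fun j hj => ?_⟩
  have hub : ∀ y ∈ K', dist (Φs (ψ j) y) (Φ y) ≤ ε / 2 := fun y hy => by
    rw [dist_comm]; exact (hN j hj y hy.1).le
  have hub' : ∀ y ∈ K', dist (Φ y) (Φs (ψ j) y) ≤ ε / 2 := fun y hy =>
    (hN j hj y hy.1).le
  have hptbd : ∀ x ∈ closure D,
      |distCompl D (Φs (ψ j) '' Ωhat) x - distCompl D (D \ Φ '' K') x| ≤ ε / 2 := by
    intro x _
    rw [distCompl_eq_infDist, distCompl_eq_infDist, eq1, eq2, abs_sub_le_iff]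
    constructor
    · linarith [infDist_image_le_add hK'ne hub x]
    · linarith [infDist_image_le_add hK'ne hub' x]
  have hle : hcDist D (Φs (ψ j) '' Ωhat) (D \ Φ '' K') ≤ ε / 2 := by
    apply Real.sSup_le _ (by linarith)
    rintro v ⟨x, hx, rfl⟩
    exact hptbd x hx
  have hge : 0 ≤ hcDist D (Φs (ψ j) '' Ωhat) (D \ Φ '' K') := by
    apply Real.sSup_nonneg
    rintro v ⟨x, hx, rfl⟩
    exact abs_nonneg _
  rw [Real.dist_eq, sub_zero, abs_of_nonneg hge]
  linarith
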